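/- Let p be an odd prime, n a positive integer, q = pⁿ, and H(x) = Σ_{k=0}^{2(p−1)} c_k x^k ∈ F_q[x]. Then Σ_{x∈F_q} H(x)^{1+p+⋯+p^{n−1}} = −c_{p−1}^{1+p+⋯+p^{n−1}} − c_{2(p−1)}^{1+p+⋯+p^{n−1}}. -/

import Mathlib

open Finset

private lemma aux_geom (p : ℕ) (hp : 1 ≤ p) (n : ℕ) :
    ∑ i ∈ Finset.range n, (p - 1) * p ^ i = p ^ n - 1 := by
  induction n with
  | zero => simp
  | succ n ih =>
    rw [Finset.sum_range_succ, ih, pow_succ]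
    have h1 : 1 ≤ p ^ n := Nat.one_le_pow _ _ hp
    have h2 : (p - 1) * p ^ n = p ^ n * p - p ^ n := by
      rw [Nat.sub_mul, one_mul, mul_comm]
    have h3 : p ^ n ≤ p ^ n * p := Nat.le_mul_of_pos_right _ hp
    omega

private lemma aux_cancel (p a b g0 : ℕ) (hp : 2 ≤ p) (hg0 : g0 ≤ 2 * (p - 1))
    (h : a * p + g0 = b * p + (p - 1)) : a = b ∧ g0 = p - 1 := by
  rcases le_total a b with hab | hab
  · obtain ⟨d, rfl⟩ := Nat.exists_eq_add_of_le hab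
    rw [add_mul] at h
    rcases Nat.eq_zero_or_pos d with rfl | hd
    · omega
    · have : p ≤ d * p := Nat.le_mul_of_pos_left p hd
      omega
  · obtain ⟨d, rfl⟩ := Nat.exists_eq_add_of_le hab
    rw [add_mul] at h
    rcases Nat.eq_zero_or_pos d with rfl | hd
    · omega
    · have : p ≤ d * p := Nat.le_mul_of_pos_left p hd
      omega

private lemma digit_uniq (p : ℕ) (hp : 2 ≤ p) :
    ∀ (n : ℕ) (g : ℕ → ℕ), (∀ i, g i ≤ 2 * (p - 1)) →
      ∑ i ∈ Finset.range n, g i * p ^ i = ∑ i ∈ Finset.range n, (p - 1) * p ^ i →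
      ∀ i < n, g i = p - 1 := by
  intro n
  induction n with
  | zero => intro g _ _ i hi; omega
  | succ n ih =>
    intro g hg hsum i hi
    rw [Finset.sum_range_succ' (fun i => g i * p ^ i),
      Finset.sum_range_succ' (fun i => (p - 1) * p ^ i)] at hsum
    simp only [pow_zero, mul_one] at hsum
    have hsum' : (∑ i ∈ Finset.range n, g (i + 1) * p ^ i) * p + g 0
        = (∑ i ∈ Finset.range n, (p - 1) * p ^ i) * p + (p - 1) := by
      rw [Finset.sum_mul, Finset.sum_mul]
      simp only [pow_succ] at hsum
      simpa only [mul_assoc] using hsum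
    obtain ⟨hab, h0⟩ := aux_cancel p _ _ _ hp (hg 0) hsum'
    cases i with
    | zero => exact h0
    | succ j => exact ih (fun i => g (i + 1)) (fun i => hg (i + 1)) hab j (by omega)

private lemma digit_max (p M n : ℕ) (hp : 0 < p) (g : ℕ → ℕ) (hg : ∀ i, g i ≤ M)
    (hsum : ∑ i ∈ Finset.range n, g i * p ^ i = ∑ i ∈ Finset.range n, M * p ^ i) :
    ∀ i < n, g i = M := by
  intro i hi
  have h := (Finset.sum_eq_sum_iff_of_le
    (fun j _ => Nat.mul_le_mul (hg j) le_rfl)).mp hsum i (Finset.mem_range.mpr hi)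
  exact Nat.eq_of_mul_eq_mul_right (pow_pos hp i) h

private lemma aux_sum_pow (K : Type*) [Field K] [Fintype K] [DecidableEq K] {m : ℕ}
    (hm : m ≠ 0) :
    ∑ x : K, x ^ m = if (Fintype.card K - 1) ∣ m then (-1 : K) else 0 := by
  let φ : Kˣ ↪ K := ⟨fun x => x, fun _ _ h => Units.ext h⟩
  have huniv : Finset.univ.map φ = Finset.univ \ {0} := by
    ext x
    simp only [Finset.mem_map, Finset.mem_univ, Function.Embedding.coeFn_mk, true_and,
      Finset.mem_sdiff, Finset.mem_singleton, φ]
    exact ⟨fun ⟨u, hu⟩ => hu ▸ u.ne_zero, fun hx => ⟨Units.mk0 x hx, rfl⟩⟩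
  calc ∑ x : K, x ^ m = ∑ x ∈ Finset.univ \ {0}, x ^ m := by
        rw [← Finset.sum_sdiff (Finset.subset_univ ({0} : Finset K)), Finset.sum_singleton,
          zero_pow hm, add_zero]
    _ = ∑ x : Kˣ, (x : K) ^ m := by
        rw [← huniv, Finset.sum_map]
        rfl
    _ = _ := FiniteField.sum_pow_units K m

theorem stmt_17 (p : ℕ) (hp : p.Prime) (hp2 : p ≠ 2) (n : ℕ) (hn : 0 < n)
    (F : Type*) [Field F] [Fintype F] (hcard : Fintype.card F = p ^ n)
    (c : ℕ → F) :
    ∑ x : F, (∑ k ∈ Finset.range (2 * (p - 1) + 1), c k * x ^ k)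
        ^ (∑ i ∈ Finset.range n, p ^ i)
      = -(c (p - 1)) ^ (∑ i ∈ Finset.range n, p ^ i)
        - (c (2 * (p - 1))) ^ (∑ i ∈ Finset.range n, p ^ i) := by
  classical
  haveI : Fact p.Prime := ⟨hp⟩
  have hp2' : 2 ≤ p := hp.two_le
  haveI hchar : CharP F p := by
    obtain ⟨r, hr⟩ := CharP.exists F
    haveI := hr
    obtain ⟨m, hrp, hm⟩ := FiniteField.card F r
    have hdvd : r ∣ p ^ n := by
      have h1 : r ^ (m : ℕ) = p ^ n := by rw [← hm]; exact hcard
      exact h1 ▸ dvd_pow_self r m.pos.ne'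
    have hrep : r = p := (Nat.prime_dvd_prime_iff_eq hrp hp).mp (hrp.dvd_of_dvd_pow hdvd)
    exact hrep ▸ hr
  have hgeom : ∑ i ∈ Finset.range n, (p - 1) * p ^ i = p ^ n - 1 :=
    aux_geom p (by omega) n
  have hq2 : 2 ≤ p ^ n := le_trans hp2' (Nat.le_self_pow hn.ne' p)
  set N := ∑ i ∈ Finset.range n, p ^ i with hN
  have Ssum : ∀ m : ℕ, m ≠ 0 → ∑ x : F, x ^ m = if (p ^ n - 1) ∣ m then (-1 : F) else 0 := by
    intro m hm
    rw [aux_sum_pow F hm]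
    simp only [hcard]
  have step1 : ∀ x : F, (∑ k ∈ Finset.range (2 * (p - 1) + 1), c k * x ^ k) ^ N
      = ∑ g ∈ Fintype.piFinset (fun _ : Fin n => Finset.range (2 * (p - 1) + 1)),
          (∏ i : Fin n, c (g i) ^ p ^ (i : ℕ)) * x ^ (∑ i : Fin n, g i * p ^ (i : ℕ)) := by
    intro x
    have h1 : (∑ k ∈ Finset.range (2 * (p - 1) + 1), c k * x ^ k) ^ N
        = ∏ i : Fin n, (∑ k ∈ Finset.range (2 * (p - 1) + 1), c k * x ^ k) ^ p ^ (i : ℕ) := by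
      rw [Finset.prod_pow_eq_pow_sum, Fin.sum_univ_eq_sum_range (fun i => p ^ i) n, hN]
    rw [h1]
    have h2 : ∀ i : Fin n, (∑ k ∈ Finset.range (2 * (p - 1) + 1), c k * x ^ k) ^ p ^ (i : ℕ)
        = ∑ k ∈ Finset.range (2 * (p - 1) + 1), c k ^ p ^ (i : ℕ) * x ^ (k * p ^ (i : ℕ)) := by
      intro i
      rw [sum_pow_char_pow]
      exact Finset.sum_congr rfl fun k _ => by rw [mul_pow, ← pow_mul]
    simp_rw [h2]
    rw [Finset.prod_univ_sum]
    refine Finset.sum_congr rfl fun g hg => ?_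
    rw [Finset.prod_mul_distrib, Finset.prod_pow_eq_pow_sum]
  simp_rw [step1]
  rw [Finset.sum_comm]
  simp_rw [← Finset.mul_sum]
  have hmem1 : (fun _ : Fin n => p - 1)
      ∈ Fintype.piFinset (fun _ : Fin n => Finset.range (2 * (p - 1) + 1)) := by
    simp only [Fintype.mem_piFinset, Finset.mem_range]
    intro i; omega
  have hmem2 : (fun _ : Fin n => 2 * (p - 1))
      ∈ Fintype.piFinset (fun _ : Fin n => Finset.range (2 * (p - 1) + 1)) := by
    simp only [Fintype.mem_piFinset, Finset.mem_range]
    intro i; omega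
  have hne : (fun _ : Fin n => p - 1) ≠ (fun _ : Fin n => 2 * (p - 1)) := by
    intro h
    have := congrFun h ⟨0, hn⟩
    omega
  have hpair : ({(fun _ : Fin n => p - 1), (fun _ : Fin n => 2 * (p - 1))} : Finset (Fin n → ℕ))
      ⊆ Fintype.piFinset (fun _ : Fin n => Finset.range (2 * (p - 1) + 1)) := by
    intro g hg
    simp only [Finset.mem_insert, Finset.mem_singleton] at hg
    rcases hg with rfl | rfl
    exacts [hmem1, hmem2]
  have hzero : ∀ g ∈ Fintype.piFinset (fun _ : Fin n => Finset.range (2 * (p - 1) + 1)),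
      g ∉ ({(fun _ : Fin n => p - 1), (fun _ : Fin n => 2 * (p - 1))} : Finset (Fin n → ℕ)) →
      (∏ i : Fin n, c (g i) ^ p ^ (i : ℕ)) * ∑ x : F, x ^ (∑ i : Fin n, g i * p ^ (i : ℕ))
        = 0 := by
    intro g hgT hgpair
    simp only [Finset.mem_insert, Finset.mem_singleton] at hgpair
    push_neg at hgpair
    obtain ⟨hne1, hne2⟩ := hgpair
    have hgle : ∀ i : Fin n, g i ≤ 2 * (p - 1) := by
      intro i
      have := (Fintype.mem_piFinset.mp hgT) i
      rw [Finset.mem_range] at this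
      omega
    by_cases h0 : (∑ i : Fin n, g i * p ^ (i : ℕ)) = 0
    · rw [h0]
      have hz : ∑ x : F, x ^ (0 : ℕ) = 0 := by
        simp only [pow_zero, Finset.sum_const, Finset.card_univ, nsmul_eq_mul, mul_one]
        exact FiniteField.cast_card_eq_zero F
      rw [hz, mul_zero]
    · rw [Ssum _ h0, if_neg, mul_zero]
      intro hdvd
      obtain ⟨t, ht⟩ := hdvd
      have hbound : (∑ i : Fin n, g i * p ^ (i : ℕ)) ≤ 2 * (p ^ n - 1) := by
        have hle : (∑ i : Fin n, g i * p ^ (i : ℕ))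
            ≤ ∑ i : Fin n, 2 * (p - 1) * p ^ (i : ℕ) :=
          Finset.sum_le_sum fun i _ => Nat.mul_le_mul (hgle i) le_rfl
        have heq : (∑ i : Fin n, 2 * (p - 1) * p ^ (i : ℕ)) = 2 * (p ^ n - 1) := by
          rw [Fin.sum_univ_eq_sum_range (fun i => 2 * (p - 1) * p ^ i) n]
          simp_rw [mul_assoc]
          rw [← Finset.mul_sum, hgeom]
        omega
      have hq1 : 1 ≤ p ^ n - 1 := by omega
      have ht2 : t = 1 ∨ t = 2 := by
        rcases Nat.lt_or_ge t 3 with h | h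
        · interval_cases t <;> omega
        · exfalso
          have h3 : (p ^ n - 1) * 3 ≤ (p ^ n - 1) * t := Nat.mul_le_mul le_rfl h
          omega
      set G : ℕ → ℕ := fun j => if h : j < n then g ⟨j, h⟩ else 0 with hG
      have hmg' : (∑ i : Fin n, g i * p ^ (i : ℕ)) = ∑ j ∈ Finset.range n, G j * p ^ j := by
        rw [← Fin.sum_univ_eq_sum_range (fun j => G j * p ^ j) n]
        refine Finset.sum_congr rfl fun i _ => ?_
        simp only [hG, i.isLt, dif_pos, Fin.eta]
      have hGle : ∀ j, G j ≤ 2 * (p - 1) := by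
        intro j
        by_cases h : j < n
        · simpa only [hG, dif_pos h] using hgle ⟨j, h⟩
        · simp [hG, h]
      rcases ht2 with rfl | rfl
      · have hsum : ∑ j ∈ Finset.range n, G j * p ^ j
            = ∑ j ∈ Finset.range n, (p - 1) * p ^ j := by
          rw [hgeom, ← hmg']
          omega
        have hdig := digit_uniq p hp2' n G hGle hsum
        apply hne1
        funext i
        have := hdig (i : ℕ) i.isLt
        simpa only [hG, i.isLt, dif_pos, Fin.eta] using this
      · have h2sum : (∑ j ∈ Finset.range n, 2 * (p - 1) * p ^ j) = 2 * (p ^ n - 1) := by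
          simp_rw [mul_assoc]
          rw [← Finset.mul_sum, hgeom]
        have hsum : ∑ j ∈ Finset.range n, G j * p ^ j
            = ∑ j ∈ Finset.range n, 2 * (p - 1) * p ^ j := by
          rw [h2sum, ← hmg']
          omega
        have hdig := digit_max p (2 * (p - 1)) n (by omega) G hGle hsum
        apply hne2
        funext i
        have := hdig (i : ℕ) i.isLt
        simpa only [hG, i.isLt, dif_pos, Fin.eta] using this
  rw [← Finset.sum_subset hpair hzero, Finset.sum_pair hne]
  have hm1 : (∑ i : Fin n, (p - 1) * p ^ (i : ℕ)) = p ^ n - 1 := by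
    rw [Fin.sum_univ_eq_sum_range (fun i => (p - 1) * p ^ i) n, hgeom]
  have hm2 : (∑ i : Fin n, 2 * (p - 1) * p ^ (i : ℕ)) = 2 * (p ^ n - 1) := by
    rw [Fin.sum_univ_eq_sum_range (fun i => 2 * (p - 1) * p ^ i) n]
    simp_rw [mul_assoc]
    rw [← Finset.mul_sum, hgeom]
  have hS1 : ∑ x : F, x ^ (p ^ n - 1) = -1 := by
    rw [Ssum _ (by omega), if_pos dvd_rfl]
  have hS2 : ∑ x : F, x ^ (2 * (p ^ n - 1)) = -1 := by
    rw [Ssum _ (by omega), if_pos (dvd_mul_left _ 2)]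
  have hA1 : (∏ i : Fin n, c (p - 1) ^ p ^ (i : ℕ)) = c (p - 1) ^ N := by
    rw [Finset.prod_pow_eq_pow_sum, Fin.sum_univ_eq_sum_range (fun i => p ^ i) n, hN]
  have hA2 : (∏ i : Fin n, c (2 * (p - 1)) ^ p ^ (i : ℕ)) = c (2 * (p - 1)) ^ N := by
    rw [Finset.prod_pow_eq_pow_sum, Fin.sum_univ_eq_sum_range (fun i => p ^ i) n, hN]
  rw [hm1, hm2, hS1, hS2, hA1, hA2]
  ring
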